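/- If m·n ≡ 1 (mod q−1), then D(q; m, 1) ≅ D(q; 1, n), and D(q; m, n) ≅ D(q; 1, n²) ≅ D(q; m², 1). -/

import Mathlib

/-- The arc relation of the monomial digraph `D(q; m, n)`. -/
def monArc {F : Type*} [Field F] (m n : ℕ) (u v : F × F) : Prop :=
  u.2 + v.2 = u.1 ^ m * v.1 ^ n

/-- Monomial digraphs `D(q; m₁,n₁)` and `D(q; m₂,n₂)` are isomorphic. -/
def monIso (F : Type*) [Field F] (m₁ n₁ m₂ n₂ : ℕ) : Prop :=
  ∃ φ : (F × F) ≃ (F × F),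
    ∀ u v : F × F, monArc m₁ n₁ u v ↔ monArc m₂ n₂ (φ u) (φ v)

lemma pow_congr_aux {F : Type*} [Field F] [Fintype F] {q a b : ℕ}
    (hq : Fintype.card F = q) (ha : 1 ≤ a) (hb : 1 ≤ b)
    (hab : a ≡ b [MOD q - 1]) (x : F) : x ^ a = x ^ b := by
  rcases eq_or_ne x 0 with rfl | hx
  · rw [zero_pow (by omega), zero_pow (by omega)]
  · classical
    set u := Units.mk0 x hx with hu
    have hdvd : orderOf u ∣ q - 1 := by
      have := orderOf_dvd_card (G := Fˣ) (x := u)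
      rwa [Fintype.card_units, hq] at this
    have huab : u ^ a = u ^ b := (pow_eq_pow_iff_modEq).mpr (hab.of_dvd hdvd)
    have := congrArg Units.val huab
    simpa [hu] using this

def powEquiv {F : Type*} [Field F] (m n : ℕ)
    (hk : ∀ x : F, x ^ (m * n) = x) (hk' : ∀ x : F, x ^ (n * m) = x) :
    (F × F) ≃ (F × F) :=
  ⟨fun p => (p.1 ^ m, p.2), fun p => (p.1 ^ n, p.2),
    fun p => by simp [← pow_mul, hk], fun p => by simp [← pow_mul, hk']⟩

/-- If `m n ≡ 1 (mod q−1)`, then `D(q; m,1) ≅ D(q; 1,n)`, and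
`D(q; m,n) ≅ D(q; 1,n²) ≅ D(q; m²,1)`. -/
theorem stmt_4 {F : Type*} [Field F] [Fintype F] (q : ℕ) (hq : Fintype.card F = q)
    (m n : ℕ) (hm : 1 ≤ m ∧ m ≤ q - 1) (hn : 1 ≤ n ∧ n ≤ q - 1)
    (h : m * n ≡ 1 [MOD q - 1]) :
    monIso F m 1 1 n ∧ monIso F m n 1 (n ^ 2) ∧ monIso F m n (m ^ 2) 1 := by
  obtain ⟨hm1, -⟩ := hm
  obtain ⟨hn1, -⟩ := hn
  have hmn : 1 ≤ m * n := Nat.one_le_iff_ne_zero.mpr (by positivity)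
  have key : ∀ x : F, x ^ (m * n) = x := fun x => by
    simpa using pow_congr_aux hq hmn le_rfl h x
  have keynm : ∀ x : F, x ^ (n * m) = x := fun x => by rw [mul_comm]; exact key x
  have h2 : m * n ^ 2 ≡ n [MOD q - 1] := by
    have := h.mul_right n; rw [one_mul] at this
    rw [show m * n ^ 2 = m * n * n by ring]; exact this
  have h3 : n * m ^ 2 ≡ m [MOD q - 1] := by
    have := h.mul_right m; rw [one_mul] at this
    rw [show n * m ^ 2 = m * n * m by ring]; exact this
  refine ⟨⟨powEquiv m n key keynm, fun u v => ?_⟩,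
    ⟨powEquiv m n key keynm, fun u v => ?_⟩,
    ⟨powEquiv n m keynm key, fun u v => ?_⟩⟩
  · simp only [monArc, powEquiv, Equiv.coe_fn_mk, pow_one, ← pow_mul, key]
  · simp only [monArc, powEquiv, Equiv.coe_fn_mk, pow_one, ← pow_mul]
    rw [pow_congr_aux hq (Nat.one_le_iff_ne_zero.mpr (by positivity)) hn1 h2 v.1]
  · simp only [monArc, powEquiv, Equiv.coe_fn_mk, pow_one, ← pow_mul]
    rw [pow_congr_aux hq (Nat.one_le_iff_ne_zero.mpr (by positivity)) hm1 h3 u.1]
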